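/- Let m ≥ 1 and let 𝒯 be a nonempty finite index set. Let μ : Fin m → ℝ with μ(i) > 0 for all i. For each T ∈ 𝒯, let k(T) ∈ ℕ, let A^T_1, …, A^T_{k(T)} be pairwise disjoint nonempty subsets of Fin m, and let β^T_1, …, β^T_{k(T)} be nonnegative reals; write α^T_j = √(Σ_{i ∈ A^T_j} μ(i)²) (which is positive). Let s : Fin m → 𝒯 → ℝ be nonnegative. If for every i ∈ Fin m one has Σ_{T ∈ 𝒯} s(i,T) > Σ_{T ∈ 𝒯} Σ_{j : i ∈ A^T_j} (β^T_j / α^T_j)·μ(i), then Σ_{i=1}^{m} ( Σ_{T ∈ 𝒯} s(i,T) )² > Σ_{T ∈ 𝒯} Σ_{j=1}^{k(T)} (β^T_j)². -/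
import Mathlib


open Finset in
/-- Computational core of Theorem 3.8 (the necessary condition for splits of the
Fréchet mean), abstracted from geodesic supports. -/
theorem mean_implies_core {𝒯 : Type*} [Fintype 𝒯] [Nonempty 𝒯]
    (m : ℕ) (hm : 1 ≤ m)
    (μ : Fin m → ℝ) (hμ : ∀ i, 0 < μ i)
    (k : 𝒯 → ℕ)
    (A : (T : 𝒯) → Fin (k T) → Finset (Fin m))
    (hAne : ∀ T j, (A T j).Nonempty)
    (hAdisj : ∀ T, ∀ j j' : Fin (k T), j ≠ j' → Disjoint (A T j) (A T j'))
    (β : (T : 𝒯) → Fin (k T) → ℝ) (hβ : ∀ T j, 0 ≤ β T j)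
    (s : Fin m → 𝒯 → ℝ) (hs : ∀ i T, 0 ≤ s i T)
    (h : ∀ i : Fin m,
      ∑ T : 𝒯, s i T >
        ∑ T : 𝒯, ∑ j ∈ univ.filter (fun j => i ∈ A T j),
          (β T j / Real.sqrt (∑ i' ∈ A T j, (μ i') ^ 2)) * μ i) :
    ∑ i : Fin m, (∑ T : 𝒯, s i T) ^ 2 > ∑ T : 𝒯, ∑ j : Fin (k T), (β T j) ^ 2 := by
  have hne : Nonempty (Fin m) := ⟨⟨0, hm⟩⟩
  set α : (T : 𝒯) → Fin (k T) → ℝ :=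
    fun T j => Real.sqrt (∑ i' ∈ A T j, (μ i') ^ 2) with hαdef
  have hα2 : ∀ T j, (α T j) ^ 2 = ∑ i' ∈ A T j, (μ i') ^ 2 := fun T j =>
    Real.sq_sqrt (Finset.sum_nonneg fun _ _ => sq_nonneg _)
  have hαpos : ∀ T j, 0 < α T j := by
    intro T j
    apply Real.sqrt_pos.2
    obtain ⟨i, hi⟩ := hAne T j
    exact Finset.sum_pos' (fun _ _ => sq_nonneg _) ⟨i, hi, pow_pos (hμ i) 2⟩
  set c : Fin m → ℝ := fun i =>
    ∑ T : 𝒯, ∑ j ∈ univ.filter (fun j => i ∈ A T j), (β T j / α T j) * μ i with hcdef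
  have hterm : ∀ i T (j : Fin (k T)), 0 ≤ (β T j / α T j) * μ i := fun i T j =>
    mul_nonneg (div_nonneg (hβ T j) (hαpos T j).le) (hμ i).le
  have hcnn : ∀ i, 0 ≤ c i := fun i =>
    Finset.sum_nonneg fun T _ => Finset.sum_nonneg fun j _ => hterm i T j
  -- Step 1: sum of squares of summands ≤ (c i)^2
  have step1 : ∀ i, ∑ T : 𝒯, ∑ j ∈ univ.filter (fun j => i ∈ A T j),
      ((β T j / α T j) * μ i) ^ 2 ≤ (c i) ^ 2 := by
    intro i
    rw [hcdef]
    simp only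
    rw [Finset.sum_sigma', Finset.sum_sigma']
    exact Finset.sum_sq_le_sq_sum_of_nonneg fun x _ => hterm i x.1 x.2
  -- Step 2: the total of the squared summands equals ∑ β².
  have step2 : ∑ i : Fin m, ∑ T : 𝒯, ∑ j ∈ univ.filter (fun j => i ∈ A T j),
      ((β T j / α T j) * μ i) ^ 2 = ∑ T : 𝒯, ∑ j : Fin (k T), (β T j) ^ 2 := by
    rw [Finset.sum_comm]
    refine Finset.sum_congr rfl fun T _ => ?_
    have swap : ∑ i : Fin m, ∑ j ∈ univ.filter (fun j => i ∈ A T j),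
        ((β T j / α T j) * μ i) ^ 2
        = ∑ j : Fin (k T), ∑ i ∈ A T j, ((β T j / α T j) * μ i) ^ 2 := by
      simp_rw [Finset.sum_filter]
      rw [Finset.sum_comm]
      refine Finset.sum_congr rfl fun j _ => ?_
      rw [← Finset.sum_filter]
      congr 1
      simp [Finset.filter_mem_eq_inter]
    rw [swap]
    refine Finset.sum_congr rfl fun j _ => ?_
    have : ∑ i ∈ A T j, ((β T j / α T j) * μ i) ^ 2
        = (β T j / α T j) ^ 2 * (α T j) ^ 2 := by
      rw [hα2, Finset.mul_sum]
      exact Finset.sum_congr rfl fun i _ => by ring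
    rw [this, div_pow, div_mul_cancel₀]
    exact pow_ne_zero 2 (hαpos T j).ne'
  -- Combine.
  calc ∑ T : 𝒯, ∑ j : Fin (k T), (β T j) ^ 2
      = ∑ i : Fin m, ∑ T : 𝒯, ∑ j ∈ univ.filter (fun j => i ∈ A T j),
          ((β T j / α T j) * μ i) ^ 2 := step2.symm
    _ ≤ ∑ i : Fin m, (c i) ^ 2 := Finset.sum_le_sum fun i _ => step1 i
    _ < ∑ i : Fin m, (∑ T : 𝒯, s i T) ^ 2 :=
        Finset.sum_lt_sum_of_nonempty Finset.univ_nonempty fun i _ =>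
          pow_lt_pow_left₀ (h i) (hcnn i) two_ne_zero
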